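/- Assume f attains its minimum on ℝⁿ. Let ρ > 0, σ > 0, κ ∈ (0,1), let L > 0 satisfy D_f(a,b) ≤ L · D_ψ(a,b) for all a, b ∈ ℝⁿ, and let γ > 0 satisfy γ·L ≤ 1 − κ and γ·σ ≤ 1. Assume the local relative strong convexity bound D_f(x̄,x) ≥ σ · D_ψ(x̄,x) for all x in the closed ball B(x̄,ρ) = {x : ‖x − x̄‖ ≤ ρ}. If x_k ∈ B(x̄,ρ) and x_{k+1} satisfies the mirror-descent update (‖x_{k+1}‖² + 1)x_{k+1} = (‖x_k‖² + 1)x_k − γ·∇f(x_k), then D_ψ(x̄,x_{k+1}) ≤ (1 − γσ) · D_ψ(x̄,x_k) + γ·‖ε‖²/m. -/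
import Mathlib

open scoped RealInnerProductSpace BigOperators

noncomputable def phaseObj (m n : ℕ) (a : Fin m → EuclideanSpace ℝ (Fin n))
    (xbar : EuclideanSpace ℝ (Fin n)) (ε : Fin m → ℝ)
    (x : EuclideanSpace ℝ (Fin n)) : ℝ :=
  (1 / (4 * (m : ℝ))) * ∑ r, (⟪a r, x⟫ ^ 2 - ⟪a r, xbar⟫ ^ 2) ^ 2
    - (1 / (2 * (m : ℝ))) * ∑ r, ε r * (⟪a r, x⟫ ^ 2 - ⟪a r, xbar⟫ ^ 2)
    + (∑ r, ε r ^ 2) / (4 * (m : ℝ))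

noncomputable def phaseGrad (m n : ℕ) (a : Fin m → EuclideanSpace ℝ (Fin n))
    (xbar : EuclideanSpace ℝ (Fin n)) (ε : Fin m → ℝ)
    (x : EuclideanSpace ℝ (Fin n)) : EuclideanSpace ℝ (Fin n) :=
  (1 / (m : ℝ)) • ∑ r, ((⟪a r, x⟫ ^ 2 - ⟪a r, xbar⟫ ^ 2 - ε r) * ⟪a r, x⟫) • a r

noncomputable def entropy (n : ℕ) (x : EuclideanSpace ℝ (Fin n)) : ℝ :=
  (1 / 4) * ‖x‖ ^ 4 + (1 / 2) * ‖x‖ ^ 2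

noncomputable def entropyGrad (n : ℕ) (x : EuclideanSpace ℝ (Fin n)) :
    EuclideanSpace ℝ (Fin n) :=
  (‖x‖ ^ 2 + 1) • x

/-- Bregman divergence of the noisy phase-retrieval objective `f`. -/
noncomputable def Df (m n : ℕ) (a : Fin m → EuclideanSpace ℝ (Fin n))
    (xbar : EuclideanSpace ℝ (Fin n)) (ε : Fin m → ℝ)
    (x z : EuclideanSpace ℝ (Fin n)) : ℝ :=
  phaseObj m n a xbar ε x - phaseObj m n a xbar ε z - ⟪phaseGrad m n a xbar ε z, x - z⟫

/-- Bregman divergence of the entropy `ψ`. -/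
noncomputable def Dψ (n : ℕ) (x z : EuclideanSpace ℝ (Fin n)) : ℝ :=
  entropy n x - entropy n z - ⟪entropyGrad n z, x - z⟫

-- aux lemmas
lemma dpsi_nonneg (n : ℕ) (x z : EuclideanSpace ℝ (Fin n)) : 0 ≤ Dψ n x z := by
  have h1 : ⟪z, x⟫ ≤ ‖z‖ * ‖x‖ := real_inner_le_norm z x
  have hx : (0:ℝ) ≤ ‖x‖ := norm_nonneg x
  have hz : (0:ℝ) ≤ ‖z‖ := norm_nonneg z
  simp only [Dψ, entropy, entropyGrad, real_inner_smul_left, inner_sub_right,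
    real_inner_self_eq_norm_sq]
  nlinarith [sq_nonneg (‖x‖ - ‖z‖),
    mul_nonneg (sq_nonneg (‖x‖ - ‖z‖)) (by nlinarith [mul_nonneg hx hz] : (0:ℝ) ≤ ‖x‖^2 + 2*‖x‖*‖z‖ + 3*‖z‖^2),
    mul_nonneg (by positivity : (0:ℝ) ≤ ‖z‖^2 + 1) (by linarith : (0:ℝ) ≤ ‖z‖ * ‖x‖ - ⟪z, x⟫)]

lemma phaseObj_nonneg (m n : ℕ) (a : Fin m → EuclideanSpace ℝ (Fin n))
    (xbar : EuclideanSpace ℝ (Fin n)) (ε : Fin m → ℝ) (hm : 1 ≤ m)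
    (x : EuclideanSpace ℝ (Fin n)) : 0 ≤ phaseObj m n a xbar ε x := by
  have hm' : (0:ℝ) < m := by exact_mod_cast hm
  have key : phaseObj m n a xbar ε x
      = (1/(4*(m:ℝ))) * ∑ r, ((⟪a r, x⟫^2 - ⟪a r, xbar⟫^2) - ε r)^2 := by
    have h : ∑ r, ((⟪a r, x⟫^2 - ⟪a r, xbar⟫^2) - ε r)^2
        = ∑ r, (⟪a r, x⟫^2 - ⟪a r, xbar⟫^2)^2
          - 2 * ∑ r, ε r * (⟪a r, x⟫^2 - ⟪a r, xbar⟫^2) + ∑ r, ε r^2 := by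
      rw [Finset.mul_sum, ← Finset.sum_sub_distrib, ← Finset.sum_add_distrib]
      exact Finset.sum_congr rfl fun r _ => by ring
    simp only [phaseObj]
    rw [h]
    field_simp
    ring
  rw [key]
  positivity
/-- one-step linear convergence of `D_ψ(x̄,·)` up to a noise term. -/
theorem stmt3 (n m : ℕ) (hm : 1 ≤ m) (a : Fin m → EuclideanSpace ℝ (Fin n))
    (xbar : EuclideanSpace ℝ (Fin n)) (ε : Fin m → ℝ)
    (hattain : ∃ xstar : EuclideanSpace ℝ (Fin n),
      ∀ x : EuclideanSpace ℝ (Fin n), phaseObj m n a xbar ε xstar ≤ phaseObj m n a xbar ε x)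
    (ρ σ κ : ℝ) (hρ : 0 < ρ) (hσ : 0 < σ) (hκ0 : 0 < κ) (hκ1 : κ < 1)
    (L : ℝ) (hLpos : 0 < L)
    (hL : ∀ p q : EuclideanSpace ℝ (Fin n), Df m n a xbar ε p q ≤ L * Dψ n p q)
    (γ : ℝ) (hγ : 0 < γ) (hγL : γ * L ≤ 1 - κ) (hγσ : γ * σ ≤ 1)
    (hsc : ∀ x ∈ Metric.closedBall xbar ρ, Df m n a xbar ε xbar x ≥ σ * Dψ n xbar x)
    (xk xkp : EuclideanSpace ℝ (Fin n)) (hxk : xk ∈ Metric.closedBall xbar ρ)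
    (hupdate : (‖xkp‖ ^ 2 + 1) • xkp = (‖xk‖ ^ 2 + 1) • xk - γ • phaseGrad m n a xbar ε xk) :
    Dψ n xbar xkp ≤ (1 - γ * σ) * Dψ n xbar xk + γ * (∑ r, ε r ^ 2) / m := by
  have hm' : (0:ℝ) < m := by exact_mod_cast hm
  set G := phaseGrad m n a xbar ε xk with hG
  set F := phaseObj m n a xbar ε with hF
  set S := ∑ r, ε r ^ 2 with hSdef
  have hS : (0:ℝ) ≤ S := by positivity
  have hg : entropyGrad n xk - entropyGrad n xkp = γ • G := by
    simp only [entropyGrad]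
    rw [hupdate]
    abel
  have key : Dψ n xbar xkp = Dψ n xbar xk - Dψ n xkp xk
      + ⟪entropyGrad n xk - entropyGrad n xkp, xbar - xkp⟫ := by
    simp only [Dψ, inner_sub_left, inner_sub_right]
    ring
  have comb : ⟪entropyGrad n xk - entropyGrad n xkp, xbar - xkp⟫
      = γ * (F xbar - F xkp) - γ * Df m n a xbar ε xbar xk + γ * Df m n a xbar ε xkp xk := by
    rw [hg]
    simp only [Df, ← hF, ← hG, real_inner_smul_left, inner_sub_right]
    ring
  have hFbar : F xbar = S / (4 * (m:ℝ)) := by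
    simp [hF, hSdef, phaseObj]
  have hFkp : 0 ≤ F xkp := phaseObj_nonneg m n a xbar ε hm xkp
  have h1 : Df m n a xbar ε xkp xk ≤ L * Dψ n xkp xk := hL xkp xk
  have h2 : 0 ≤ Dψ n xkp xk := dpsi_nonneg n xkp xk
  have h2' : 0 ≤ Dψ n xbar xk := dpsi_nonneg n xbar xk
  have h3 : σ * Dψ n xbar xk ≤ Df m n a xbar ε xbar xk := hsc xk hxk
  have h4 : γ * Df m n a xbar ε xkp xk ≤ γ * (L * Dψ n xkp xk) :=
    mul_le_mul_of_nonneg_left h1 hγ.le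
  have h5 : (γ * L) * Dψ n xkp xk ≤ (1 - κ) * Dψ n xkp xk :=
    mul_le_mul_of_nonneg_right hγL h2
  have h6 : γ * (σ * Dψ n xbar xk) ≤ γ * Df m n a xbar ε xbar xk :=
    mul_le_mul_of_nonneg_left h3 hγ.le
  have h7 : γ * S / (4 * (m:ℝ)) ≤ γ * S / m := by
    apply div_le_div_of_nonneg_left (by positivity) hm' (by linarith)
  have e1 : γ * (L * Dψ n xkp xk) = (γ * L) * Dψ n xkp xk := by ring
  have e2 : γ * (S / (4 * (m:ℝ)) - F xkp) ≤ γ * S / (4 * (m:ℝ)) := by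
    have hq := mul_nonneg hγ.le hFkp
    have : γ * (S / (4 * (m:ℝ)) - F xkp) = γ * S / (4 * (m:ℝ)) - γ * F xkp := by ring
    linarith
  have e3 : (1 - γ * σ) * Dψ n xbar xk = Dψ n xbar xk - γ * (σ * Dψ n xbar xk) := by ring
  have e4 : 0 ≤ κ * Dψ n xkp xk := mul_nonneg hκ0.le h2
  have e5 : (1 - κ) * Dψ n xkp xk = Dψ n xkp xk - κ * Dψ n xkp xk := by ring
  rw [key, comb, hFbar]
  linarith
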